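/- Uniqueness of the homography from four correspondences: if M and M' are invertible 3×3 matrices inducing homographies that agree on four points in general position (no three collinear, all in both domains), then M' = λM for some nonzero scalar λ. -/

import Mathlib

open Matrix

lemma collinear_of_cross_eq_zero (a b c : ℝ × ℝ)
    (h : (b.1 - a.1) * (c.2 - a.2) - (b.2 - a.2) * (c.1 - a.1) = 0) :
    Collinear ℝ ({a, b, c} : Set (ℝ × ℝ)) := by
  by_cases hba : b = a
  · subst hba
    have : ({b, b, c} : Set (ℝ × ℝ)) = {b, c} := by
      simp [Set.insert_comm]
    rw [this]
    exact collinear_pair ℝ b c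
  · rw [collinear_iff_of_mem (Set.mem_insert a _)]
    refine ⟨b - a, ?_⟩
    intro x hx
    rcases hx with rfl | rfl | rfl
    · exact ⟨0, by simp⟩
    · exact ⟨1, by simp⟩
    · have hne : b.1 - a.1 ≠ 0 ∨ b.2 - a.2 ≠ 0 := by
        by_contra hc
        push_neg at hc
        exact hba (Prod.ext (by linarith [hc.1]) (by linarith [hc.2]))
      rcases hne with h1 | h2
      · refine ⟨(x.1 - a.1) / (b.1 - a.1), ?_⟩
        apply Prod.ext
        · simp only [Prod.smul_fst, Prod.fst_vadd, Prod.fst_sub, smul_eq_mul, vadd_eq_add, Prod.fst_add, Prod.snd_add]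
          field_simp
          ring
        · simp only [Prod.smul_snd, Prod.snd_vadd, Prod.snd_sub, smul_eq_mul, vadd_eq_add, Prod.fst_add, Prod.snd_add]
          field_simp
          linear_combination h
      · refine ⟨(x.2 - a.2) / (b.2 - a.2), ?_⟩
        apply Prod.ext
        · simp only [Prod.smul_fst, Prod.fst_vadd, Prod.fst_sub, smul_eq_mul, vadd_eq_add, Prod.fst_add, Prod.snd_add]
          field_simp
          linear_combination -h
        · simp only [Prod.smul_snd, Prod.snd_vadd, Prod.snd_sub, smul_eq_mul, vadd_eq_add, Prod.fst_add, Prod.snd_add]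
          field_simp
          ring

theorem homography_unique_from_four_points (M M' : Matrix (Fin 3) (Fin 3) ℝ)
    (hM : IsUnit M.det) (hM' : IsUnit M'.det)
    (p q : Fin 4 → ℝ × ℝ) (w w' : Fin 4 → ℝ) (hw : ∀ i, w i ≠ 0) (hw' : ∀ i, w' i ≠ 0)
    (hmap : ∀ i, Matrix.vecMul ![(p i).1, (p i).2, 1] M = w i • ![(q i).1, (q i).2, 1])
    (hmap' : ∀ i, Matrix.vecMul ![(p i).1, (p i).2, 1] M' = w' i • ![(q i).1, (q i).2, 1])
    (hgen : ∀ i j k : Fin 4, i ≠ j → j ≠ k → i ≠ k →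
      ¬ Collinear ℝ ({p i, p j, p k} : Set (ℝ × ℝ))) :
    ∃ lam : ℝ, lam ≠ 0 ∧ M' = lam • M := by
  classical
  set v : Fin 4 → Fin 3 → ℝ := fun i => ![(p i).1, (p i).2, 1] with hv
  have hdet3 : ∀ i j k : Fin 4, i ≠ j → j ≠ k → i ≠ k →
      (Matrix.of ![v i, v j, v k]).det ≠ 0 := by
    intro i j k hij hjk hik hdet
    apply hgen i j k hij hjk hik
    apply collinear_of_cross_eq_zero
    rw [Matrix.det_fin_three] at hdet
    simp only [hv, Matrix.of_apply, Matrix.cons_val', Matrix.cons_val_zero,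
      Matrix.cons_val_one, Matrix.head_cons, Matrix.head_fin_const, Matrix.cons_val_fin_one,
      Matrix.empty_val', Matrix.cons_val_two, Matrix.tail_cons] at hdet
    linear_combination hdet
  set μ : Fin 4 → ℝ := fun i => w' i / w i with hμdef
  have hμ : ∀ i, μ i ≠ 0 := fun i => div_ne_zero (hw' i) (hw i)
  have key : ∀ i, v i ᵥ* M' = μ i • (v i ᵥ* M) := by
    intro i
    rw [hmap i, hmap' i, smul_smul, div_mul_cancel₀ _ (hw i)]
  set P : Matrix (Fin 3) (Fin 3) ℝ := Matrix.of ![v 0, v 1, v 2] with hPdef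
  have hP : P.det ≠ 0 := hdet3 0 1 2 (by decide) (by decide) (by decide)
  have hPu : IsUnit P.det := isUnit_iff_ne_zero.2 hP
  have hexp : ∀ x : Fin 3 → ℝ, x ᵥ* P = x 0 • v 0 + x 1 • v 1 + x 2 • v 2 := by
    intro x
    ext j
    simp [hPdef, Matrix.vecMul, dotProduct, Fin.sum_univ_three]
  set c : Fin 3 → ℝ := v 3 ᵥ* P⁻¹ with hcdef
  have hc3 : v 3 = c 0 • v 0 + c 1 • v 1 + c 2 • v 2 := by
    rw [← hexp c, hcdef, Matrix.vecMul_vecMul, Matrix.nonsing_inv_mul P hPu, Matrix.vecMul_one]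
  -- nonvanishing of the coordinates of c
  have hcne : ∀ m : Fin 3, c m ≠ 0 := by
    intro m hm
    have main : ∀ (a b : Fin 4) (ca cb : Fin 3), a ≠ b → v 3 = c ca • v a + c cb • v b →
        (3 : Fin 4) ≠ a → (3 : Fin 4) ≠ b →
        ¬ (Matrix.of ![v 3, v a, v b]).det ≠ 0 := by
      intro a b ca cb hab hcomb h3a h3b hdet
      have hz : (![1, -(c ca), -(c cb)] : Fin 3 → ℝ) = 0 :=
        Matrix.eq_zero_of_vecMul_eq_zero hdet (by
          ext j
          have h3 := congrFun hcomb j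
          simp only [Pi.add_apply, Pi.smul_apply, smul_eq_mul] at h3
          simp [Matrix.vecMul, dotProduct, Fin.sum_univ_three]
          linarith)
      have := congrFun hz 0
      simp at this
    fin_cases m
    · replace hm : c 0 = 0 := hm
      exact main 1 2 1 2 (by decide) (by rw [hc3, hm, zero_smul, zero_add])
        (by decide) (by decide) (hdet3 3 1 2 (by decide) (by decide) (by decide))
    · replace hm : c 1 = 0 := hm
      exact main 0 2 0 2 (by decide) (by rw [hc3, hm, zero_smul, add_zero])
        (by decide) (by decide) (hdet3 3 0 2 (by decide) (by decide) (by decide))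
    · replace hm : c 2 = 0 := hm
      exact main 0 1 0 1 (by decide) (by rw [hc3, hm, zero_smul, add_zero])
        (by decide) (by decide) (hdet3 3 0 1 (by decide) (by decide) (by decide))
  -- the eigenvalues agree
  have e3 : (c 0 * (μ 0 - μ 3)) • (v 0 ᵥ* M) + (c 1 * (μ 1 - μ 3)) • (v 1 ᵥ* M)
      + (c 2 * (μ 2 - μ 3)) • (v 2 ᵥ* M) = 0 := by
    have hk := key 3
    rw [hc3, Matrix.add_vecMul, Matrix.add_vecMul, Matrix.smul_vecMul, Matrix.smul_vecMul,
      Matrix.smul_vecMul, Matrix.add_vecMul, Matrix.add_vecMul, Matrix.smul_vecMul,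
      Matrix.smul_vecMul, Matrix.smul_vecMul, key 0, key 1, key 2] at hk
    ext j
    have := congrFun hk j
    simp only [Pi.add_apply, Pi.smul_apply, Pi.zero_apply, smul_eq_mul] at this ⊢
    linear_combination this
  have hPM : (P * M).det ≠ 0 := by
    rw [Matrix.det_mul]
    exact mul_ne_zero hP hM.ne_zero
  have hd : (![c 0 * (μ 0 - μ 3), c 1 * (μ 1 - μ 3), c 2 * (μ 2 - μ 3)] : Fin 3 → ℝ) = 0 := by
    apply Matrix.eq_zero_of_vecMul_eq_zero hPM
    rw [← Matrix.vecMul_vecMul, hexp]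
    simp only [Matrix.cons_val_zero, Matrix.cons_val_one, Matrix.head_cons,
      Matrix.cons_val_two, Matrix.tail_cons]
    rw [Matrix.add_vecMul, Matrix.add_vecMul, Matrix.smul_vecMul, Matrix.smul_vecMul,
      Matrix.smul_vecMul]
    exact e3
  have hq0 : μ 0 = μ 3 := by
    have := congrFun hd 0
    simp only [Matrix.cons_val_zero, Pi.zero_apply, mul_eq_zero] at this
    rcases this with h | h
    · exact absurd h (hcne 0)
    · linarith
  have hq1 : μ 1 = μ 3 := by
    have := congrFun hd 1
    simp only [Matrix.cons_val_one, Matrix.head_cons, Pi.zero_apply, mul_eq_zero] at this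
    rcases mul_eq_zero.mp this with h | h
    · exact absurd h (hcne 1)
    · linarith
  have hq2 : μ 2 = μ 3 := by
    have := congrFun hd 2
    simp only [Matrix.cons_val_two, Matrix.tail_cons, Matrix.head_cons, Pi.zero_apply,
      mul_eq_zero] at this
    rcases this with h | h
    · exact absurd h (hcne 2)
    · linarith
  refine ⟨μ 3, hμ 3, ?_⟩
  have hrow : ∀ i : Fin 3, P i ᵥ* M' = P i ᵥ* (μ 3 • M) := by
    intro i
    have hPi : ∃ a : Fin 4, P i = v a ∧ μ a = μ 3 := by
      fin_cases i
      · exact ⟨0, rfl, hq0⟩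
      · exact ⟨1, rfl, hq1⟩
      · exact ⟨2, rfl, hq2⟩
    obtain ⟨a, ha, hμa⟩ := hPi
    rw [ha, key a, hμa]
    ext j
    simp only [Pi.smul_apply, smul_eq_mul, Matrix.vecMul, dotProduct,
      Matrix.smul_apply, Finset.mul_sum]
    exact Finset.sum_congr rfl fun k _ => by ring
  have hPM' : P * M' = P * (μ 3 • M) := by
    ext i j
    have := congrFun (hrow i) j
    simpa [Matrix.mul_apply, Matrix.vecMul, dotProduct] using this
  have := congrArg (fun N => P⁻¹ * N) hPM'
  simpa [← Matrix.mul_assoc, Matrix.nonsing_inv_mul P hPu] using this
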